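/- Let Ω ⊂ ℝ^d be a nonempty compact convex set and P : ℝ^d → Ω the metric (closest-point) projection onto Ω. Let f : ℝ^d × Z → ℝ be such that for every z, f(·; z) is γ-strongly convex, β-smooth, and L-Lipschitz on Ω. Let S = (z_1,…,z_n) and S' = (z'_1,…,z'_n) be two datasets differing in at most one coordinate. Run projected SGMM with constant learning rate α and momentum μ on both datasets with the same index sequence: w_0 = w_{−1} = w'_0 = w'_{−1} ∈ Ω, w_{t+1} = P( w_t + μ(w_t − w_{t−1}) − α∇_w f(w_t; z_{i_t}) ), and similarly for w'_{t+1} with z'_{i_t}, where i_0,…,i_{T−1} are i.i.d. uniform on {1,…,n}. If α ≤ 2/(β+γ) and αβγ/(β+γ) − 1/2 ≤ μ < αβγ/(3(β+γ)), then for every z ∈ Z, E_A[ f(w_T; z) − f(w'_T; z) ] ≤ 2αL²(β+γ) / ( n·( αβγ − 3μ(β+γ) ) ); in particular SGMM is ε_s-uniformly stable with ε_s ≤ 2αL²(β+γ)/( n( αβγ − 3μ(β+γ) ) ). -/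

import Mathlib

open scoped BigOperators RealInnerProductSpace
open Filter Set Topology

section SGMMAux
set_option linter.unusedSectionVars false
variable {E : Type*} [NormedAddCommGroup E] [InnerProductSpace ℝ E] [CompleteSpace E]

lemma sgmm_fderiv_inner (f : E → ℝ) (hf : Differentiable ℝ f) (x y : E) :
    fderiv ℝ f x y = ⟪gradient f x, y⟫ := by
  have h := (hf x).hasGradientAt
  rw [h.hasFDerivAt.fderiv]
  exact InnerProductSpace.toDual_apply_apply

/-- directional derivative bound along chords of a convex set where `f` is Lipschitz -/
lemma sgmm_grad_dir_le {Ω : Set E} (hconv : Convex ℝ Ω) (f : E → ℝ) (L : ℝ)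
    (hf : Differentiable ℝ f) (hlip : ∀ u ∈ Ω, ∀ v ∈ Ω, |f u - f v| ≤ L * ‖u - v‖)
    {v a b : E} (hv : v ∈ Ω) (ha : a ∈ Ω) (hb : b ∈ Ω) :
    ⟪gradient f v, a - b⟫ ≤ L * ‖a - b‖ := by
  have hcurve : ∀ c : E, HasDerivAt (fun s : ℝ => f (v + s • (c - v))) ⟪gradient f v, c - v⟫ 0 := by
    intro c
    have hc : HasDerivAt (fun s : ℝ => v + s • (c - v)) (c - v) 0 := by
      simpa using ((hasDerivAt_id (0:ℝ)).smul_const (c - v)).const_add v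
    have hder : HasFDerivAt f (InnerProductSpace.toDual ℝ E (gradient f v))
        ((fun s : ℝ => v + s • (c - v)) 0) := by
      simpa using (hf v).hasGradientAt.hasFDerivAt
    have := hder.comp_hasDerivAt (x := (0:ℝ)) hc
    simpa [InnerProductSpace.toDual_apply_apply, Function.comp_def] using this
  set F := fun s : ℝ => f (v + s • (a - v)) with hF
  set G := fun s : ℝ => f (v + s • (b - v)) with hG
  have hFs : Tendsto (slope F 0) (𝓝[≠] (0:ℝ)) (𝓝 ⟪gradient f v, a - v⟫) :=
    hasDerivAt_iff_tendsto_slope.mp (hcurve a)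
  have hGs : Tendsto (slope G 0) (𝓝[≠] (0:ℝ)) (𝓝 ⟪gradient f v, b - v⟫) :=
    hasDerivAt_iff_tendsto_slope.mp (hcurve b)
  have hsub : Tendsto (fun s => slope F 0 s - slope G 0 s) (𝓝[>] (0:ℝ))
      (𝓝 ⟪gradient f v, a - b⟫) := by
    have : (⟪gradient f v, a - b⟫ : ℝ) = ⟪gradient f v, a - v⟫ - ⟪gradient f v, b - v⟫ := by
      rw [← inner_sub_right]; congr 1; abel
    rw [this]
    exact (hFs.sub hGs).mono_left (nhdsWithin_mono _ (fun x hx => ne_of_gt hx))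
  refine le_of_tendsto hsub ?_
  filter_upwards [Ioc_mem_nhdsGT (zero_lt_one)] with s hs
  have hs0 : (0:ℝ) < s := hs.1
  have hmema : v + s • (a - v) ∈ Ω := hconv.add_smul_sub_mem hv ha ⟨le_of_lt hs0, hs.2⟩
  have hmemb : v + s • (b - v) ∈ Ω := hconv.add_smul_sub_mem hv hb ⟨le_of_lt hs0, hs.2⟩
  have hdist : |F s - G s| ≤ L * (s * ‖a - b‖) := by
    have := hlip _ hmema _ hmemb
    have heq : (v + s • (a - v)) - (v + s • (b - v)) = s • (a - b) := by
      module
    rw [heq] at this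
    simpa [norm_smul, abs_of_pos hs0] using this
  have hslope : slope F 0 s - slope G 0 s = (F s - G s) / s := by
    have hF0G0 : F 0 = G 0 := by simp [hF, hG]
    rw [slope_def_field, slope_def_field, hF0G0]
    field_simp
    rw [sub_zero, mul_div_cancel_left₀ _ (ne_of_gt hs0)]
    ring
  rw [hslope, div_le_iff₀ hs0]
  calc F s - G s ≤ |F s - G s| := le_abs_self _
    _ ≤ L * (s * ‖a - b‖) := hdist
    _ = L * ‖a - b‖ * s := by ring


/-- the descent lemma: smoothness upper bound -/
lemma sgmm_descent (f : E → ℝ) (β : ℝ) (hβ : 0 ≤ β) (hf : Differentiable ℝ f)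
    (hsm : ∀ u v, ‖gradient f u - gradient f v‖ ≤ β * ‖u - v‖) (u v : E) :
    f u ≤ f v + ⟪gradient f v, u - v⟫ + β / 2 * ‖u - v‖ ^ 2 := by
  have hgcont : Continuous (fun x => gradient f x) := by
    have : LipschitzWith β.toNNReal (fun x => gradient f x) := by
      apply LipschitzWith.of_dist_le_mul
      intro x y
      simpa [dist_eq_norm, Real.coe_toNNReal β hβ] using hsm x y
    exact this.continuous
  have hcurve : ∀ t : ℝ, HasDerivAt (fun s : ℝ => f (v + s • (u - v)))
      ⟪gradient f (v + t • (u - v)), u - v⟫ t := by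
    intro t
    have hc : HasDerivAt (fun s : ℝ => v + s • (u - v)) (u - v) t := by
      simpa using ((hasDerivAt_id t).smul_const (u - v)).const_add v
    have hder : HasFDerivAt f (InnerProductSpace.toDual ℝ E (gradient f (v + t • (u - v))))
        ((fun s : ℝ => v + s • (u - v)) t) := by
      exact (hf _).hasGradientAt.hasFDerivAt
    have := hder.comp_hasDerivAt (x := t) hc
    simpa [InnerProductSpace.toDual_apply_apply, Function.comp_def] using this
  have hcontint : Continuous (fun t : ℝ => ⟪gradient f (v + t • (u - v)), u - v⟫) := by
    apply Continuous.inner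
    · exact hgcont.comp (by continuity)
    · exact continuous_const
  have hint : ∫ t in (0:ℝ)..1, ⟪gradient f (v + t • (u - v)), u - v⟫ = f u - f v := by
    have := intervalIntegral.integral_eq_sub_of_hasDerivAt
      (f := fun s : ℝ => f (v + s • (u - v)))
      (f' := fun t : ℝ => ⟪gradient f (v + t • (u - v)), u - v⟫)
      (a := 0) (b := 1) (fun t _ => hcurve t) (hcontint.intervalIntegrable 0 1)
    simpa using this
  have hcont2 : Continuous (fun t : ℝ => ⟪gradient f v, u - v⟫ + β * t * ‖u - v‖ ^ 2) := by
    fun_prop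
  have hcont3 : Continuous (fun t : ℝ => β * t * ‖u - v‖ ^ 2) := by fun_prop
  have hmono : ∫ t in (0:ℝ)..1, ⟪gradient f (v + t • (u - v)), u - v⟫
      ≤ ∫ t in (0:ℝ)..1, (⟪gradient f v, u - v⟫ + β * t * ‖u - v‖ ^ 2) := by
    apply intervalIntegral.integral_mono_on (by norm_num)
      (hcontint.intervalIntegrable 0 1)
      (hcont2.intervalIntegrable 0 1)
    intro t ht
    have h1 : ⟪gradient f (v + t • (u - v)) - gradient f v, u - v⟫
        ≤ β * t * ‖u - v‖ ^ 2 := by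
      calc ⟪gradient f (v + t • (u - v)) - gradient f v, u - v⟫
          ≤ ‖gradient f (v + t • (u - v)) - gradient f v‖ * ‖u - v‖ :=
            real_inner_le_norm _ _
        _ ≤ (β * ‖(v + t • (u - v)) - v‖) * ‖u - v‖ := by
            apply mul_le_mul_of_nonneg_right (hsm _ _) (norm_nonneg _)
        _ = β * t * ‖u - v‖ ^ 2 := by
            have : (v + t • (u - v)) - v = t • (u - v) := by abel
            rw [this, norm_smul, Real.norm_eq_abs, abs_of_nonneg ht.1]
            ring
    have := inner_sub_left (𝕜 := ℝ) (gradient f (v + t • (u - v))) (gradient f v) (u - v)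
    linarith [h1, this.symm.le, this.le]
  have hval : ∫ t in (0:ℝ)..1, (⟪gradient f v, u - v⟫ + β * t * ‖u - v‖ ^ 2)
      = ⟪gradient f v, u - v⟫ + β / 2 * ‖u - v‖ ^ 2 := by
    rw [intervalIntegral.integral_add (intervalIntegrable_const)
      (hcont3.intervalIntegrable 0 1)]
    simp only [intervalIntegral.integral_const, smul_eq_mul, one_smul, sub_zero]
    have : ∫ t in (0:ℝ)..1, β * t * ‖u - v‖ ^ 2
        = β * ‖u - v‖ ^ 2 * ∫ t in (0:ℝ)..1, t := by
      rw [← intervalIntegral.integral_const_mul]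
      congr 1; ext t; ring
    rw [this, integral_id]
    ring_nf
  linarith [hint ▸ hmono, hval ▸ hmono]

/-- Baillon–Haddad style co-coercivity from convexity + a quadratic upper bound. -/
lemma sgmm_cocoercive_aux (h : E → ℝ) (gh : E → E) (c : ℝ) (hc : 0 < c)
    (hconv : ∀ u v, h v + ⟪gh v, u - v⟫ ≤ h u)
    (hupper : ∀ u v, h u ≤ h v + ⟪gh v, u - v⟫ + c / 2 * ‖u - v‖ ^ 2) (u v : E) :
    ‖gh u - gh v‖ ^ 2 ≤ c * ⟪gh u - gh v, u - v⟫ := by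
  have key : ∀ u v, ‖gh u - gh v‖ ^ 2 ≤ 2 * c * (h u - h v - ⟪gh v, u - v⟫) := by
    intro u v
    set Δ := gh u - gh v with hΔ
    have h1 := hupper (u - (1/c) • Δ) u
    have h2 := hconv (u - (1/c) • Δ) v
    have e1 : (u - (1/c) • Δ) - u = -((1/c) • Δ) := by abel
    have e2 : (u - (1/c) • Δ) - v = (u - v) - (1/c) • Δ := by abel
    rw [e1] at h1
    rw [e2] at h2
    have i1 : ⟪gh u, -((1/c) • Δ)⟫ = -((1/c) * ⟪gh u, Δ⟫) := by
      rw [inner_neg_right, real_inner_smul_right]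
    have i2 : ‖-((1/c) • Δ)‖ ^ 2 = (1/c)^2 * ‖Δ‖ ^ 2 := by
      rw [norm_neg, norm_smul, mul_pow, Real.norm_eq_abs, sq_abs]
    have i3 : ⟪gh v, (u - v) - (1/c) • Δ⟫ = ⟪gh v, u - v⟫ - (1/c) * ⟪gh v, Δ⟫ := by
      rw [inner_sub_right, real_inner_smul_right]
    rw [i1, i2] at h1
    rw [i3] at h2
    have i4 : ⟪gh u, Δ⟫ - ⟪gh v, Δ⟫ = ‖Δ‖ ^ 2 := by
      rw [← inner_sub_left, hΔ, real_inner_self_eq_norm_sq]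
    have hc' : c ≠ 0 := ne_of_gt hc
    have comb : (1/c) * ⟪gh u, Δ⟫ - (1/c) * ⟪gh v, Δ⟫ - c/2 * (1/c)^2 * ‖Δ‖^2
        ≤ h u - h v - ⟪gh v, u - v⟫ := by linarith
    have hmul := mul_le_mul_of_nonneg_left comb (by linarith : (0:ℝ) ≤ 2*c)
    have hid : 2*c*((1/c) * ⟪gh u, Δ⟫ - (1/c) * ⟪gh v, Δ⟫ - c/2*(1/c)^2*‖Δ‖^2)
        = 2*(⟪gh u, Δ⟫ - ⟪gh v, Δ⟫) - ‖Δ‖^2 := by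
      field_simp
    rw [hid] at hmul
    linarith [i4 ▸ hmul]
  have k1 := key u v
  have k2 := key v u
  have e4 : ‖gh v - gh u‖ = ‖gh u - gh v‖ := norm_sub_rev _ _
  rw [e4] at k2
  have i5 : ⟪gh u, v - u⟫ = -⟪gh u, u - v⟫ := by
    rw [← inner_neg_right]; congr 1; abel
  rw [i5] at k2
  have i6 : ⟪gh u - gh v, u - v⟫ = ⟪gh u, u - v⟫ - ⟪gh v, u - v⟫ := inner_sub_left _ _ _
  rw [i6]
  nlinarith [k1, k2]

/-- full co-coercivity for a strongly convex smooth function -/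
lemma sgmm_cocoercive (f : E → ℝ) (β γ : ℝ) (hβ : 0 < β) (hγ : 0 < γ)
    (hf : Differentiable ℝ f)
    (hsc : ∀ u v, f v + ⟪gradient f v, u - v⟫ + γ / 2 * ‖u - v‖ ^ 2 ≤ f u)
    (hsm : ∀ u v, ‖gradient f u - gradient f v‖ ≤ β * ‖u - v‖) (u v : E) :
    β * γ * ‖u - v‖ ^ 2 + ‖gradient f u - gradient f v‖ ^ 2
      ≤ (β + γ) * ⟪gradient f u - gradient f v, u - v⟫ := by
  rcases eq_or_ne u v with rfl | huv
  · simp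
  have hne : (0:ℝ) < ‖u - v‖ ^ 2 :=
    pow_pos (norm_sub_pos_iff.mpr huv) 2
  have hγβ : γ ≤ β := by
    have h1 := hsc u v
    have h2 := sgmm_descent f β (le_of_lt hβ) hf hsm u v
    nlinarith [h1, h2, hne]
  set h : E → ℝ := fun x => f x - γ / 2 * ‖x‖ ^ 2 with hh
  set gh : E → E := fun x => gradient f x - γ • x with hgh
  have norm_id : ∀ a b : E, ‖a‖ ^ 2 - ‖b‖ ^ 2 - 2 * ⟪b, a - b⟫ = ‖a - b‖ ^ 2 := by
    intro a b
    have := norm_sub_sq_real a b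
    have hsym : ⟪a, b⟫ = ⟪b, a⟫ := real_inner_comm b a
    have hab : ⟪b, a - b⟫ = ⟪b, a⟫ - ⟪b, b⟫ := inner_sub_right _ _ _
    have hbb : ⟪b, b⟫ = ‖b‖ ^ 2 := real_inner_self_eq_norm_sq b
    linarith [this, hab, hbb, hsym]
  have hghinner : ∀ a b : E, ⟪gh b, a - b⟫ = ⟪gradient f b, a - b⟫ - γ * ⟪b, a - b⟫ := by
    intro a b
    rw [hgh]
    simp only
    rw [inner_sub_left, real_inner_smul_left]
  have hconv : ∀ a b, h b + ⟪gh b, a - b⟫ ≤ h a := by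
    intro a b
    have h1 := hsc a b
    have h2 := norm_id a b
    have h3 := hghinner a b
    simp only [hh]
    nlinarith [h1, h2, h3]
  have hupper : ∀ ε : ℝ, 0 < ε → ∀ a b,
      h a ≤ h b + ⟪gh b, a - b⟫ + (β - γ + ε) / 2 * ‖a - b‖ ^ 2 := by
    intro ε hε a b
    have h1 := sgmm_descent f β (le_of_lt hβ) hf hsm a b
    have h2 := norm_id a b
    have h3 := hghinner a b
    simp only [hh]
    nlinarith [sq_nonneg ‖a - b‖]
  have hipnn : 0 ≤ ⟪gh u - gh v, u - v⟫ := by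
    have h1 := hconv u v
    have h2 := hconv v u
    have i5 : ⟪gh u, v - u⟫ = -⟪gh u, u - v⟫ := by
      rw [← inner_neg_right]; congr 1; abel
    have i6 : ⟪gh u - gh v, u - v⟫ = ⟪gh u, u - v⟫ - ⟪gh v, u - v⟫ := inner_sub_left _ _ _
    linarith [h1, h2, i5 ▸ h2, i6]
  have hlim : ‖gh u - gh v‖ ^ 2 ≤ (β - γ) * ⟪gh u - gh v, u - v⟫ := by
    have step : ∀ ε : ℝ, 0 < ε →
        ‖gh u - gh v‖ ^ 2 ≤ (β - γ) * ⟪gh u - gh v, u - v⟫ + ε := by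
      intro ε hε
      set ip := ⟪gh u - gh v, u - v⟫ with hip
      have hε' : 0 < ε / (ip + 1) := by positivity
      have := sgmm_cocoercive_aux h gh (β - γ + ε / (ip + 1))
        (by linarith) hconv (hupper _ hε') u v
      have hfrac : (ε / (ip + 1)) * ip ≤ ε := by
        rw [div_mul_eq_mul_div, div_le_iff₀ (by linarith)]
        nlinarith [hipnn]
      nlinarith [this, hfrac]
    by_contra hcon
    push_neg at hcon
    have := step ((‖gh u - gh v‖ ^ 2 - (β - γ) * ⟪gh u - gh v, u - v⟫) / 2) (by linarith)
    linarith
  -- expand gh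
  have e1 : gh u - gh v = (gradient f u - gradient f v) - γ • (u - v) := by
    simp only [hgh]
    rw [smul_sub]; abel
  set Δg := gradient f u - gradient f v with hΔg
  set Δ := u - v with hΔ
  have e2 : ‖Δg - γ • Δ‖ ^ 2 = ‖Δg‖ ^ 2 - 2 * γ * ⟪Δg, Δ⟫ + γ ^ 2 * ‖Δ‖ ^ 2 := by
    rw [norm_sub_sq_real, real_inner_smul_right, norm_smul, Real.norm_eq_abs, mul_pow, sq_abs]
    ring
  have e3 : ⟪Δg - γ • Δ, Δ⟫ = ⟪Δg, Δ⟫ - γ * ‖Δ‖ ^ 2 := by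
    rw [inner_sub_left, real_inner_smul_left, real_inner_self_eq_norm_sq]
  rw [e1] at hlim
  rw [e2, e3] at hlim
  nlinarith [hlim]


lemma sgmm_proj_VI {Ω : Set E} (hconv : Convex ℝ Ω) (P : E → E)
    (hP : ∀ x, P x ∈ Ω ∧ ∀ y ∈ Ω, ‖x - P x‖ ≤ ‖x - y‖) (x : E) {y : E} (hy : y ∈ Ω) :
    ⟪x - P x, y - P x⟫ ≤ 0 := by
  have hbound : ∀ t : ℝ, t ∈ Ioc (0:ℝ) 1 →
      ⟪x - P x, y - P x⟫ ≤ t / 2 * ‖y - P x‖ ^ 2 := by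
    intro t ht
    have hyt : P x + t • (y - P x) ∈ Ω :=
      hconv.add_smul_sub_mem (hP x).1 hy ⟨le_of_lt ht.1, ht.2⟩
    have hle := (hP x).2 _ hyt
    have hle2 : ‖x - P x‖ ^ 2 ≤ ‖(x - P x) - t • (y - P x)‖ ^ 2 := by
      have harg : x - (P x + t • (y - P x)) = (x - P x) - t • (y - P x) := by abel
      have := pow_le_pow_left₀ (norm_nonneg _) hle 2
      rw [harg] at this
      exact this
    have hexp : ‖(x - P x) - t • (y - P x)‖ ^ 2
        = ‖x - P x‖ ^ 2 - 2 * (t * ⟪x - P x, y - P x⟫) + t ^ 2 * ‖y - P x‖ ^ 2 := by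
      rw [norm_sub_sq_real, real_inner_smul_right, norm_smul, Real.norm_eq_abs, mul_pow, sq_abs]
    rw [hexp] at hle2
    have h3 : 2 * t * ⟪x - P x, y - P x⟫ ≤ t ^ 2 * ‖y - P x‖ ^ 2 := by nlinarith [hle2]
    have h4 := mul_le_mul_of_nonneg_left h3 (le_of_lt (one_div_pos.mpr (by linarith [ht.1] : (0:ℝ) < 2 * t)))
    have ht0 : t ≠ 0 := ne_of_gt ht.1
    calc ⟪x - P x, y - P x⟫ = 1 / (2*t) * (2 * t * ⟪x - P x, y - P x⟫) := by
          field_simp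
      _ ≤ 1 / (2*t) * (t ^ 2 * ‖y - P x‖ ^ 2) := h4
      _ = t / 2 * ‖y - P x‖ ^ 2 := by field_simp
  have htend : Tendsto (fun t : ℝ => t / 2 * ‖y - P x‖ ^ 2) (𝓝[>] (0:ℝ)) (𝓝 0) := by
    have hco : Continuous (fun t : ℝ => t / 2 * ‖y - P x‖ ^ 2) := by fun_prop
    have := (hco.tendsto 0).mono_left (nhdsWithin_le_nhds (s := Ioi (0:ℝ)))
    simpa using this
  refine ge_of_tendsto htend ?_
  filter_upwards [Ioc_mem_nhdsGT (zero_lt_one)] with t ht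
  exact hbound t ht

lemma sgmm_proj_key {Ω : Set E} (hconv : Convex ℝ Ω) (P : E → E)
    (hP : ∀ x, P x ∈ Ω ∧ ∀ y ∈ Ω, ‖x - P x‖ ≤ ‖x - y‖) (x x' : E) :
    ‖P x - P x'‖ ^ 2 ≤ ⟪x - x', P x - P x'⟫ := by
  have h1 := sgmm_proj_VI hconv P hP x (hP x').1
  have h2 := sgmm_proj_VI hconv P hP x' (hP x).1
  have e1 : ⟪x - P x, P x' - P x⟫ = -⟪x - P x, P x - P x'⟫ := by
    rw [← inner_neg_right]; congr 1; abel
  rw [e1] at h1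
  have e2 : ⟪x - x', P x - P x'⟫ - ‖P x - P x'‖ ^ 2
      = ⟪x - P x, P x - P x'⟫ - ⟪x' - P x', P x - P x'⟫ := by
    rw [← real_inner_self_eq_norm_sq, ← inner_sub_left, ← inner_sub_left]
    congr 1
    abel
  linarith [h1, h2, e2]

lemma sgmm_proj_nonexp {Ω : Set E} (hconv : Convex ℝ Ω) (P : E → E)
    (hP : ∀ x, P x ∈ Ω ∧ ∀ y ∈ Ω, ‖x - P x‖ ≤ ‖x - y‖) (x x' : E) :
    ‖P x - P x'‖ ≤ ‖x - x'‖ := by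
  have hk := sgmm_proj_key hconv P hP x x'
  have hcs : ⟪x - x', P x - P x'⟫ ≤ ‖x - x'‖ * ‖P x - P x'‖ := real_inner_le_norm _ _
  rcases eq_or_lt_of_le (norm_nonneg (P x - P x')) with h0 | h0
  · rw [← h0]; exact norm_nonneg _
  · nlinarith [hk, hcs, h0]


lemma sgmm_contract (α β γ : ℝ) (hβ : 0 < β) (hγ : 0 < γ) (hα0 : 0 < α)
    (hαs : α * (β + γ) ≤ 2) (Δ Δg : E)
    (hco : β * γ * ‖Δ‖ ^ 2 + ‖Δg‖ ^ 2 ≤ (β + γ) * ⟪Δg, Δ⟫) :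
    ‖Δ - α • Δg‖ ≤ (1 - α * β * γ / (β + γ)) * ‖Δ‖ := by
  have hs : (0:ℝ) < β + γ := by linarith
  set ρ := α * β * γ / (β + γ) with hρdef
  have hkey : (β + γ) * ρ = α * β * γ := by
    rw [hρdef]; field_simp
  have hρhalf : ρ ≤ 1 / 2 := by
    rw [hρdef, div_le_iff₀ hs]
    nlinarith [sq_nonneg (β - γ), mul_pos hβ hγ, mul_le_mul_of_nonneg_right hαs
      (le_of_lt (mul_pos hβ hγ))]
  have h1ρ : (0:ℝ) ≤ 1 - ρ := by linarith
  have hsq : ‖Δ - α • Δg‖ ^ 2 ≤ ((1 - ρ) * ‖Δ‖) ^ 2 := by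
    have hexp : ‖Δ - α • Δg‖ ^ 2
        = ‖Δ‖ ^ 2 - 2 * (α * ⟪Δ, Δg⟫) + α ^ 2 * ‖Δg‖ ^ 2 := by
      rw [norm_sub_sq_real, real_inner_smul_right, norm_smul, Real.norm_eq_abs, mul_pow, sq_abs]
    have hcomm : ⟪Δ, Δg⟫ = ⟪Δg, Δ⟫ := real_inner_comm _ _
    set N := ‖Δ‖ ^ 2 with hN
    set G := ‖Δg‖ ^ 2 with hG
    set I := ⟪Δg, Δ⟫ with hI
    have hNnn : 0 ≤ N := sq_nonneg _
    have hGnn : 0 ≤ G := sq_nonneg _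
    have h1 := mul_le_mul_of_nonneg_left hco (by linarith : (0:ℝ) ≤ 2 * α)
    have hkeyN : (β + γ) * ρ * N = α * β * γ * N := by rw [hkey]
    have hG2 : 0 ≤ α * G * (2 - α * (β + γ)) := by
      apply mul_nonneg (mul_nonneg (le_of_lt hα0) hGnn)
      linarith
    have hρ2N : 0 ≤ (β + γ) * ρ ^ 2 * N := by positivity
    have claim' : (β + γ) * (-(2 * (α * I)) + α ^ 2 * G)
        ≤ (β + γ) * (-(2 * (ρ * N)) + ρ ^ 2 * N) := by nlinarith [h1, hkeyN, hG2, hρ2N]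
    have claim := le_of_mul_le_mul_left claim' hs
    rw [hexp, hcomm]
    nlinarith [claim]
  have := Real.sqrt_le_sqrt (le_of_lt (lt_of_le_of_lt hsq (lt_add_one _)))
  have h2 := Real.sqrt_le_sqrt hsq
  rw [Real.sqrt_sq (norm_nonneg _), Real.sqrt_sq (mul_nonneg h1ρ (norm_nonneg _))] at h2
  exact h2

lemma sgmm_count {n T : ℕ} (k : Fin T) (j : Fin n) (C : ℝ) :
    ∑ idx : Fin T → Fin n, (if idx k = j then C else 0) = (n:ℝ)^(T-1) * C := by
  classical
  rw [← Equiv.sum_comp (Equiv.funSplitAt k (Fin n)).symm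
    (fun idx => if idx k = j then C else 0)]
  have : ∀ p : Fin n × ({ i : Fin T // i ≠ k } → Fin n),
      ((Equiv.funSplitAt k (Fin n)).symm p) k = p.1 := by
    intro p
    simp [Equiv.funSplitAt, Equiv.piSplitAt]
  rw [Fintype.sum_prod_type]
  simp only [this]
  have hcard : Fintype.card ({ i : Fin T // i ≠ k } → Fin n) = n ^ (T - 1) := by
    rw [Fintype.card_fun]
    congr 1
    · exact Fintype.card_fin n
    · rw [Fintype.card_subtype_compl (p := fun i => i = k)]
      simp [Fintype.card_subtype_eq]
  simp only [Finset.sum_const, Finset.card_univ, hcard]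
  rw [← Finset.smul_sum, Finset.sum_ite_eq' Finset.univ j (fun _ => C)]
  simp only [Finset.mem_univ, if_true, nsmul_eq_mul]
  push_cast
  ring



end SGMMAux

/-- Uniform stability of projected SGMM for strongly convex, smooth losses
that are Lipschitz on the compact convex parameter set `Ω`.  Natural-number
subtraction encodes the convention `w_{-1} = w_0`. -/
theorem stmt_8 {d n T : ℕ} (hn : 0 < n) {Z : Type*}
    (Ω : Set (EuclideanSpace ℝ (Fin d))) (hΩne : Ω.Nonempty)
    (hΩc : IsCompact Ω) (hΩconv : Convex ℝ Ω)
    (P : EuclideanSpace ℝ (Fin d) → EuclideanSpace ℝ (Fin d))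
    (hP : ∀ x, P x ∈ Ω ∧ ∀ y ∈ Ω, ‖x - P x‖ ≤ ‖x - y‖)
    (f : EuclideanSpace ℝ (Fin d) → Z → ℝ)
    (L β γ α μ : ℝ) (hL : 0 < L) (hβ : 0 < β) (hγ : 0 < γ) (hα0 : 0 < α) (hμ0 : 0 ≤ μ)
    (hdiff : ∀ z, Differentiable ℝ (fun v => f v z))
    (hsc : ∀ z u v, f u z ≥ f v z + ⟪gradient (fun x => f x z) v, u - v⟫
      + (γ / 2) * ‖u - v‖ ^ 2)
    (hsm : ∀ z u v, ‖gradient (fun x => f x z) u - gradient (fun x => f x z) v‖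
      ≤ β * ‖u - v‖)
    (hlip : ∀ z, ∀ u ∈ Ω, ∀ v ∈ Ω, |f u z - f v z| ≤ L * ‖u - v‖)
    (S S' : Fin n → Z) (hSS' : ∃ j, ∀ i, i ≠ j → S i = S' i)
    (hα : α ≤ 2 / (β + γ))
    (hμlb : α * β * γ / (β + γ) - 1 / 2 ≤ μ)
    (hμub : μ < α * β * γ / (3 * (β + γ)))
    (w0 : EuclideanSpace ℝ (Fin d)) (hw0Ω : w0 ∈ Ω)
    (w w' : (Fin T → Fin n) → ℕ → EuclideanSpace ℝ (Fin d))
    (hw0 : ∀ idx, w idx 0 = w0) (hw'0 : ∀ idx, w' idx 0 = w0)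
    (hrec : ∀ idx (t : Fin T),
      w idx ((t : ℕ) + 1) = P (w idx (t : ℕ)
        + μ • (w idx (t : ℕ) - w idx ((t : ℕ) - 1))
        - α • gradient (fun v => f v (S (idx t))) (w idx (t : ℕ))))
    (hrec' : ∀ idx (t : Fin T),
      w' idx ((t : ℕ) + 1) = P (w' idx (t : ℕ)
        + μ • (w' idx (t : ℕ) - w' idx ((t : ℕ) - 1))
        - α • gradient (fun v => f v (S' (idx t))) (w' idx (t : ℕ)))) :
    ∀ z : Z,
      (∑ idx : Fin T → Fin n, (f (w idx T) z - f (w' idx T) z)) / (n : ℝ) ^ T ≤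
        2 * α * L ^ 2 * (β + γ) / ((n : ℝ) * (α * β * γ - 3 * μ * (β + γ))) := by
  intro z
  classical
  obtain ⟨j, hj⟩ := hSS'
  have hs : (0:ℝ) < β + γ := by linarith
  have hαs : α * (β + γ) ≤ 2 := (le_div_iff₀ hs).mp hα
  set ρ : ℝ := α * β * γ / (β + γ) with hρdef
  have hkey : (β + γ) * ρ = α * β * γ := by
    rw [hρdef]; field_simp
  have hρ3μ : 0 < ρ - 3 * μ := by
    have h3s : (0:ℝ) < 3 * (β + γ) := by linarith
    have h1 := (lt_div_iff₀ h3s).mp hμub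
    have hgt : (β + γ) * (3 * μ) < (β + γ) * ρ := by
      rw [hkey]; linarith [h1]
    have := (mul_lt_mul_iff_right₀ hs).mp hgt
    linarith
  have h1ρμ : (0:ℝ) ≤ 1 - ρ + μ := by linarith [hμlb]
  have hn0 : (0:ℝ) < (n:ℝ) := by exact_mod_cast hn
  -- co-coercivity
  have hco : ∀ z : Z, ∀ u v : EuclideanSpace ℝ (Fin d),
      β * γ * ‖u - v‖ ^ 2
        + ‖gradient (fun x => f x z) u - gradient (fun x => f x z) v‖ ^ 2
        ≤ (β + γ) * ⟪gradient (fun x => f x z) u - gradient (fun x => f x z) v, u - v⟫ := by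
    intro z u v
    refine sgmm_cocoercive (fun x => f x z) β γ hβ hγ (hdiff z) ?_ (hsm z) u v
    intro u v
    show f v z + ⟪gradient (fun x => f x z) v, u - v⟫ + γ / 2 * ‖u - v‖ ^ 2 ≤ f u z
    linarith [hsc z u v]
  -- contraction
  have hcontr : ∀ z : Z, ∀ u v : EuclideanSpace ℝ (Fin d),
      ‖(u - v) - α • (gradient (fun x => f x z) u - gradient (fun x => f x z) v)‖
        ≤ (1 - ρ) * ‖u - v‖ := by
    intro z u v
    rw [hρdef]
    exact sgmm_contract α β γ hβ hγ hα0 hαs _ _ (hco z u v)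
  -- gradient bounded along chords
  have hgdir : ∀ z : Z, ∀ v ∈ Ω, ∀ a ∈ Ω, ∀ b ∈ Ω,
      ⟪gradient (fun x => f x z) v, a - b⟫ ≤ L * ‖a - b‖ := by
    intro z v hv a ha b hb
    exact sgmm_grad_dir_le hΩconv (fun x => f x z) L (hdiff z) (hlip z) hv ha hb
  -- differing-sample step
  have hdstep : ∀ z1 z2 : Z, ∀ v ∈ Ω, ∀ m : EuclideanSpace ℝ (Fin d),
      ‖P (m - α • gradient (fun x => f x z1) v) - P (m - α • gradient (fun x => f x z2) v)‖
        ≤ 2 * α * L := by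
    intro z1 z2 v hv m
    have hkey2 := sgmm_proj_key hΩconv P hP (m - α • gradient (fun x => f x z1) v)
      (m - α • gradient (fun x => f x z2) v)
    set q := P (m - α • gradient (fun x => f x z1) v) with hq
    set q' := P (m - α • gradient (fun x => f x z2) v) with hq'
    have hqΩ : q ∈ Ω := (hP _).1
    have hq'Ω : q' ∈ Ω := (hP _).1
    have hxx : (m - α • gradient (fun x => f x z1) v) - (m - α • gradient (fun x => f x z2) v)
        = α • (gradient (fun x => f x z2) v - gradient (fun x => f x z1) v) := by module
    rw [hxx] at hkey2
    have hI : ⟪α • (gradient (fun x => f x z2) v - gradient (fun x => f x z1) v), q - q'⟫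
        = α * (⟪gradient (fun x => f x z2) v, q - q'⟫
          + ⟪gradient (fun x => f x z1) v, q' - q⟫) := by
      rw [real_inner_smul_left, inner_sub_left]
      have he : ⟪gradient (fun x => f x z1) v, q' - q⟫
          = -⟪gradient (fun x => f x z1) v, q - q'⟫ := by
        rw [← inner_neg_right]; congr 1; abel
      rw [he]; ring
    rw [hI] at hkey2
    have hb1 := hgdir z2 v hv q hqΩ q' hq'Ω
    have hb2 := hgdir z1 v hv q' hq'Ω q hqΩ
    rw [norm_sub_rev q' q] at hb2
    have hsq : ‖q - q'‖ ^ 2 ≤ 2 * α * L * ‖q - q'‖ := by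
      calc ‖q - q'‖ ^ 2
          ≤ α * (⟪gradient (fun x => f x z2) v, q - q'⟫
            + ⟪gradient (fun x => f x z1) v, q' - q⟫) := hkey2
        _ ≤ α * (L * ‖q - q'‖ + L * ‖q - q'‖) :=
            mul_le_mul_of_nonneg_left (add_le_add hb1 hb2) (le_of_lt hα0)
        _ = 2 * α * L * ‖q - q'‖ := by ring
    rcases eq_or_lt_of_le (norm_nonneg (q - q')) with h0 | h0
    · rw [← h0]; positivity
    · nlinarith [hsq, h0]
  -- iterates stay in Ω
  have hmem : ∀ idx : Fin T → Fin n, ∀ t : ℕ, t ≤ T → w idx t ∈ Ω ∧ w' idx t ∈ Ω := by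
    intro idx t
    induction t with
    | zero => intro _; rw [hw0 idx, hw'0 idx]; exact ⟨hw0Ω, hw0Ω⟩
    | succ t ih =>
      intro h
      have htT : t < T := h
      have e1 := hrec idx ⟨t, htT⟩
      have e2 := hrec' idx ⟨t, htT⟩
      simp only [Fin.val_mk] at e1 e2
      rw [e1, e2]
      exact ⟨(hP _).1, (hP _).1⟩
  -- triangle helper
  have tri : ∀ x y z' : EuclideanSpace ℝ (Fin d), ‖x - z'‖ ≤ ‖x - y‖ + ‖y - z'‖ := by
    intro x y z'
    simpa [dist_eq_norm] using dist_triangle x y z'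
  -- per-realization one-step bound
  have hstep : ∀ (idx : Fin T → Fin n) (t : ℕ) (ht : t < T),
      ‖w idx (t+1) - w' idx (t+1)‖
        ≤ (1 - ρ + μ) * ‖w idx t - w' idx t‖ + μ * ‖w idx (t-1) - w' idx (t-1)‖
          + (if idx ⟨t, ht⟩ = j then 2*α*L else 0) := by
    intro idx t ht
    have e1 := hrec idx ⟨t, ht⟩
    have e2 := hrec' idx ⟨t, ht⟩
    simp only [Fin.val_mk] at e1 e2
    have hfirst : ∀ zz : Z,
        ‖P (w idx t + μ • (w idx t - w idx (t-1))
            - α • gradient (fun v => f v zz) (w idx t))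
          - P (w' idx t + μ • (w' idx t - w' idx (t-1))
            - α • gradient (fun v => f v zz) (w' idx t))‖
          ≤ (1 - ρ + μ) * ‖w idx t - w' idx t‖ + μ * ‖w idx (t-1) - w' idx (t-1)‖ := by
      intro zz
      refine le_trans (sgmm_proj_nonexp hΩconv P hP _ _) ?_
      have hxx : (w idx t + μ • (w idx t - w idx (t-1))
            - α • gradient (fun v => f v zz) (w idx t))
          - (w' idx t + μ • (w' idx t - w' idx (t-1))
            - α • gradient (fun v => f v zz) (w' idx t))
          = ((w idx t - w' idx t) - α • (gradient (fun v => f v zz) (w idx t)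
              - gradient (fun v => f v zz) (w' idx t)))
            + μ • ((w idx t - w' idx t) - (w idx (t-1) - w' idx (t-1))) := by module
      rw [hxx]
      refine le_trans (norm_add_le _ _) ?_
      have hc1 := hcontr zz (w idx t) (w' idx t)
      have hc2 : ‖μ • ((w idx t - w' idx t) - (w idx (t-1) - w' idx (t-1)))‖
          ≤ μ * (‖w idx t - w' idx t‖ + ‖w idx (t-1) - w' idx (t-1)‖) := by
        rw [norm_smul, Real.norm_eq_abs, abs_of_nonneg hμ0]
        exact mul_le_mul_of_nonneg_left (norm_sub_le _ _) hμ0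
      linarith [hc1, hc2]
    by_cases hcase : idx ⟨t, ht⟩ = j
    · rw [e1, e2, if_pos hcase]
      have h2 := hdstep (S (idx ⟨t, ht⟩)) (S' (idx ⟨t, ht⟩)) (w' idx t)
        (hmem idx t (le_of_lt ht)).2 (w' idx t + μ • (w' idx t - w' idx (t-1)))
      have hfz := hfirst (S (idx ⟨t, ht⟩))
      refine le_trans (tri _ (P (w' idx t + μ • (w' idx t - w' idx (t-1))
        - α • gradient (fun v => f v (S (idx ⟨t, ht⟩))) (w' idx t))) _) ?_
      linarith [hfz, h2]
    · have hz : S' (idx ⟨t, ht⟩) = S (idx ⟨t, ht⟩) := (hj _ hcase).symm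
      rw [hz] at e2
      rw [e1, e2, if_neg hcase, add_zero]
      exact hfirst (S (idx ⟨t, ht⟩))
  -- averaged one-step bound
  have hsum : ∀ (t : ℕ), t < T →
      (∑ idx : Fin T → Fin n, ‖w idx (t+1) - w' idx (t+1)‖)
        ≤ (1 - ρ + μ) * (∑ idx : Fin T → Fin n, ‖w idx t - w' idx t‖)
          + μ * (∑ idx : Fin T → Fin n, ‖w idx (t-1) - w' idx (t-1)‖)
          + 2*α*L*(n:ℝ)^(T-1) := by
    intro t ht
    have hb : (∑ idx : Fin T → Fin n, ‖w idx (t+1) - w' idx (t+1)‖)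
        ≤ ∑ idx : Fin T → Fin n, ((1 - ρ + μ) * ‖w idx t - w' idx t‖
            + μ * ‖w idx (t-1) - w' idx (t-1)‖
            + (if idx ⟨t, ht⟩ = j then 2*α*L else 0)) :=
      Finset.sum_le_sum (fun idx _ => hstep idx t ht)
    rw [Finset.sum_add_distrib, Finset.sum_add_distrib, ← Finset.mul_sum, ← Finset.mul_sum,
      sgmm_count ⟨t, ht⟩ j (2*α*L)] at hb
    linarith [hb]
  -- the uniform bound, by strong induction
  set C : ℝ := 2*α*L/((n:ℝ)*(ρ-3*μ)) * (n:ℝ)^T with hCdef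
  have hCnn : 0 ≤ C := by
    rw [hCdef]
    apply mul_nonneg
    · apply div_nonneg (by positivity)
      exact mul_nonneg (le_of_lt hn0) (le_of_lt hρ3μ)
    · positivity
  have hmain : ∀ t : ℕ, t ≤ T →
      (∑ idx : Fin T → Fin n, ‖w idx t - w' idx t‖) ≤ C := by
    intro t
    induction t using Nat.strong_induction_on with
    | _ t ih =>
      cases t with
      | zero =>
        intro _
        have ha0 : (∑ idx : Fin T → Fin n, ‖w idx 0 - w' idx 0‖) = 0 := by
          apply Finset.sum_eq_zero
          intro idx _
          rw [hw0 idx, hw'0 idx, sub_self, norm_zero]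
        rw [ha0]; exact hCnn
      | succ t =>
        intro h
        have ht : t < T := h
        have h1 := ih t (Nat.lt_succ_self t) (Nat.le_of_lt ht)
        have h2 := ih (t-1) (Nat.lt_succ_of_le (Nat.sub_le t 1))
          (le_trans (Nat.sub_le t 1) (Nat.le_of_lt ht))
        have h3 := hsum t ht
        have hnn : (n:ℝ)^(T-1) * (n:ℝ) = (n:ℝ)^T := by
          rw [← pow_succ]
          congr 1
          omega
        have h2aL : 2*α*L*(n:ℝ)^(T-1) = (ρ-3*μ)*C := by
          rw [hCdef, ← hnn]
          have hden : (n:ℝ)*(ρ-3*μ) ≠ 0 := by positivity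
          field_simp
        have m1 := mul_le_mul_of_nonneg_left h1 h1ρμ
        have m2 := mul_le_mul_of_nonneg_left h2 hμ0
        have hμC : 0 ≤ μ * C := mul_nonneg hμ0 hCnn
        linarith [h3, m1, m2, hμC, h2aL]
  -- conclusion
  have hfa : (∑ idx : Fin T → Fin n, (f (w idx T) z - f (w' idx T) z))
      ≤ L * (∑ idx : Fin T → Fin n, ‖w idx T - w' idx T‖) := by
    rw [Finset.mul_sum]
    apply Finset.sum_le_sum
    intro idx _
    have hm := hmem idx T (le_refl T)
    calc f (w idx T) z - f (w' idx T) z ≤ |f (w idx T) z - f (w' idx T) z| := le_abs_self _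
      _ ≤ L * ‖w idx T - w' idx T‖ := hlip z _ hm.1 _ hm.2
  have hnT : (0:ℝ) < (n:ℝ)^T := by positivity
  rw [div_le_iff₀ hnT]
  have he : α*β*γ - 3*μ*(β+γ) = (β+γ)*(ρ-3*μ) := by
    rw [← hkey]; ring
  have hLC : L * C = 2 * α * L ^ 2 * (β + γ) / ((n : ℝ) * (α * β * γ - 3 * μ * (β + γ)))
      * (n:ℝ)^T := by
    rw [hCdef, he]
    have h1 : (ρ - 3*μ) ≠ 0 := ne_of_gt hρ3μ
    have h2 : (n:ℝ) ≠ 0 := ne_of_gt hn0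
    have h3 : (β+γ) ≠ 0 := ne_of_gt hs
    field_simp
  calc (∑ idx : Fin T → Fin n, (f (w idx T) z - f (w' idx T) z))
      ≤ L * (∑ idx : Fin T → Fin n, ‖w idx T - w' idx T‖) := hfa
    _ ≤ L * C := mul_le_mul_of_nonneg_left (hmain T (le_refl T)) (le_of_lt hL)
    _ = _ := hLC
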